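/- arXiv:1405.3920 — 2 statements merged into one kernel-verified Lean document; each statement's English description precedes it below -/
import Mathlib

section
/- If X is a random variable with continuous strictly increasing CDF F, and M ⊆ ℝ is a Borel set with P(X ∈ M) > 0, then conditional on {X ∈ M}, the statistic T = P(X ≥ x, X ∈ M)/P(X ∈ M) evaluated at x = X is uniformly distributed on [0,1]. -/
open MeasureTheory ProbabilityTheory Set

open Filter Topology ENNReal

theorem truncated_cdf_transform_uniform
    {Ω : Type*} [MeasurableSpace Ω] (P : Measure Ω) [IsProbabilityMeasure P]
    (X : Ω → ℝ) (hX : Measurable X)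
    (hCont : Continuous (fun x : ℝ => (P (X ⁻¹' Set.Iic x)).toReal))
    (hMono : StrictMono (fun x : ℝ => (P (X ⁻¹' Set.Iic x)).toReal))
    (M : Set ℝ) (hM : MeasurableSet M) (hpos : 0 < P (X ⁻¹' M)) :
    Measure.map
        (fun ω => ((P {ω' | X ω' ∈ M ∧ X ω ≤ X ω'}) / (P (X ⁻¹' M))).toReal)
        (P[|X ⁻¹' M])
      = volume.restrict (Set.Icc (0 : ℝ) 1) := by
  classical
  -- the law of X
  set μ : Measure ℝ := P.map X with hμdef
  haveI : IsProbabilityMeasure μ := Measure.isProbabilityMeasure_map hX.aemeasurable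
  have hmap : ∀ s : Set ℝ, MeasurableSet s → μ s = P (X ⁻¹' s) := fun s hs =>
    Measure.map_apply hX hs
  set F : ℝ → ℝ := fun x => (μ (Iic x)).toReal with hFdef
  have hFeq : F = fun x : ℝ => (P (X ⁻¹' Set.Iic x)).toReal := by
    funext x
    rw [hFdef]
    simp only [hmap _ measurableSet_Iic]
  have hFcont : Continuous F := by rw [hFeq]; exact hCont
  have hFmono : Monotone F := by rw [hFeq]; exact hMono.monotone
  -- measure of Ioc in terms of F
  have hIoc : ∀ x y : ℝ, x ≤ y → (μ (Ioc x y)).toReal = F y - F x := by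
    intro x y hxy
    have hsub : Iic x ∪ Ioc x y = Iic y := Iic_union_Ioc_eq_Iic hxy
    have hdisj : Disjoint (Iic x) (Ioc x y) := by
      rw [Set.disjoint_left]
      rintro z hz ⟨hz1, -⟩
      simp only [mem_Iic] at hz
      exact absurd hz1 (not_lt.mpr hz)
    have hadd : μ (Iic y) = μ (Iic x) + μ (Ioc x y) := by
      rw [← hsub, measure_union hdisj measurableSet_Ioc]
    have : F y = F x + (μ (Ioc x y)).toReal := by
      rw [hFdef]
      simp only
      rw [hadd, ENNReal.toReal_add (measure_ne_top _ _) (measure_ne_top _ _)]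
    linarith
  -- μ has no atoms
  haveI hNA : NullSingletonClass μ := by
    constructor
    intro x
    have key : ∀ y, y < x → (μ {x}).toReal ≤ F x - F y := by
      intro y hy
      have h2 : μ {x} ≤ μ (Ioc y x) := by
        apply measure_mono
        intro z hz
        simp only [mem_singleton_iff] at hz
        simp [hz, hy]
      calc (μ {x}).toReal ≤ (μ (Ioc y x)).toReal :=
            ENNReal.toReal_mono (measure_ne_top _ _) h2
        _ = F x - F y := hIoc y x hy.le
    have hlim : Tendsto (fun y => F x - F y) (𝓝[<] x) (𝓝 0) := by
      have h1 : Tendsto F (𝓝[<] x) (𝓝 (F x)) :=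
        (hFcont.tendsto x).mono_left nhdsWithin_le_nhds
      have h2 := (tendsto_const_nhds (x := F x) (f := 𝓝[<] x)).sub h1
      simpa using h2
    have hle : (μ {x}).toReal ≤ 0 :=
      ge_of_tendsto hlim (eventually_nhdsWithin_of_forall fun y hy => key y hy)
    have h0 : (μ {x}).toReal = 0 := le_antisymm hle ENNReal.toReal_nonneg
    exact ((ENNReal.toReal_eq_zero_iff _).mp h0).resolve_right (measure_ne_top _ _)
  -- the truncated tail function
  set c : ENNReal := μ M with hcdef
  have hcP : c = P (X ⁻¹' M) := hmap M hM
  have hc0 : c ≠ 0 := by rw [hcP]; exact hpos.ne'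
  have hcT : c ≠ ⊤ := measure_ne_top _ _
  set cR : ℝ := c.toReal with hcRdef
  have hcR0 : 0 < cR := ENNReal.toReal_pos hc0 hcT
  set G : ℝ → ENNReal := fun x => μ (M ∩ Ici x) with hGdef
  have hGT : ∀ x, G x ≠ ⊤ := fun x => measure_ne_top _ _
  have hGc : ∀ x, G x ≤ c := fun x => measure_mono inter_subset_left
  set g : ℝ → ℝ := fun x => (G x).toReal with hgdef
  have hganti : Antitone g := fun x y hxy =>
    ENNReal.toReal_mono (hGT _)
      (measure_mono (inter_subset_inter_right _ (Ici_subset_Ici.mpr hxy)))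
  have hg_nonneg : ∀ x, 0 ≤ g x := fun x => ENNReal.toReal_nonneg
  have hg_le : ∀ x, g x ≤ cR := fun x => ENNReal.toReal_mono hcT (hGc x)
  -- additivity
  have hGadd : ∀ x y : ℝ, x ≤ y → G x = μ (M ∩ Ico x y) + G y := by
    intro x y hxy
    have hdisj : Disjoint (M ∩ Ico x y) (M ∩ Ici y) := by
      rw [Set.disjoint_left]
      rintro z ⟨-, -, hz2⟩ ⟨-, hz3⟩
      exact absurd hz3 (not_le.mpr hz2)
    rw [hGdef]
    simp only
    rw [← measure_union hdisj (hM.inter measurableSet_Ici), ← inter_union_distrib_left,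
      Ico_union_Ici_eq_Ici hxy]
  have hgdiff : ∀ x y : ℝ, x ≤ y → g x - g y = (μ (M ∩ Ico x y)).toReal := by
    intro x y hxy
    rw [hgdef]
    simp only
    rw [hGadd x y hxy, ENNReal.toReal_add (measure_ne_top _ _) (hGT y)]
    ring
  -- modulus of continuity bound
  have hkey_bound : ∀ x y : ℝ, x ≤ y → g x - g y ≤ F y - F x := by
    intro x y hxy
    rw [hgdiff x y hxy]
    have h1 : μ (M ∩ Ico x y) ≤ μ (Ioc x y) := by
      calc μ (M ∩ Ico x y) ≤ μ (Ico x y) := measure_mono inter_subset_right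
        _ = μ (Ioc x y) := measure_congr Ico_ae_eq_Ioc
    calc (μ (M ∩ Ico x y)).toReal ≤ (μ (Ioc x y)).toReal :=
          ENNReal.toReal_mono (measure_ne_top _ _) h1
      _ = F y - F x := hIoc x y hxy
  -- continuity of g
  have hgcont : Continuous g := by
    rw [continuous_iff_continuousAt]
    intro a
    rw [ContinuousAt, tendsto_iff_dist_tendsto_zero]
    have hb : ∀ x, dist (g x) (g a) ≤ dist (F x) (F a) := by
      intro x
      rw [Real.dist_eq, Real.dist_eq]
      rcases le_total x a with h | h
      · rw [abs_of_nonneg (sub_nonneg.mpr (hganti h)),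
          abs_of_nonpos (sub_nonpos.mpr (hFmono h))]
        linarith [hkey_bound x a h]
      · rw [abs_of_nonpos (sub_nonpos.mpr (hganti h)),
          abs_of_nonneg (sub_nonneg.mpr (hFmono h))]
        linarith [hkey_bound a x h]
    have htend : Tendsto (fun x => dist (F x) (F a)) (𝓝 a) (𝓝 0) := by
      have := (hFcont.tendsto a).dist (tendsto_const_nhds (x := F a))
      simpa using this
    exact squeeze_zero (fun x => dist_nonneg) hb htend
  -- limits of G
  have hanti_sets : Antitone (fun x : ℝ => M ∩ Ici x) := fun x y hxy =>
    inter_subset_inter_right _ (Ici_subset_Ici.mpr hxy)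
  have hGbot : Tendsto G atBot (𝓝 c) := by
    have h1 := tendsto_measure_iUnion_atBot (μ := μ) hanti_sets
    have h2 : ⋃ x : ℝ, M ∩ Ici x = M := by
      ext z
      simp only [mem_iUnion, mem_inter_iff, mem_Ici]
      exact ⟨fun ⟨x, hz, _⟩ => hz, fun hz => ⟨z, hz, le_rfl⟩⟩
    rw [h2] at h1
    exact h1
  have hGtop : Tendsto G atTop (𝓝 0) := by
    have h1 := tendsto_measure_iInter_atTop (μ := μ)
      (fun x : ℝ => (hM.inter measurableSet_Ici).nullMeasurableSet) hanti_sets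
      ⟨0, measure_ne_top _ _⟩
    have h2 : ⋂ x : ℝ, M ∩ Ici x = ∅ := by
      ext z
      simp only [mem_iInter, mem_inter_iff, mem_Ici, mem_empty_iff_false, iff_false, not_forall]
      exact ⟨z + 1, fun ⟨_, h⟩ => by linarith⟩
    rw [h2, measure_empty] at h1
    exact h1
  have hgtop : Tendsto g atTop (𝓝 0) := by
    have := (ENNReal.tendsto_toReal (by simp)).comp hGtop
    simpa [hgdef, Function.comp_def] using this
  have hgbot : Tendsto g atBot (𝓝 cR) := by
    have := (ENNReal.tendsto_toReal hcT).comp hGbot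
    simpa [hgdef, hcRdef, Function.comp_def] using this
  have hex_lt : ∀ v : ℝ, 0 < v → ∃ x, g x < v := fun v hv =>
    (hgtop.eventually_lt_const hv).exists
  have hex_gt : ∀ v : ℝ, v < cR → ∃ x₀, v < g x₀ := fun v hv =>
    (hgbot.eventually_const_lt hv).exists
  -- key computation
  have hkey : ∀ v : ℝ, 0 ≤ v → v < cR → μ (M ∩ {x | g x ≤ v}) = ENNReal.ofReal v := by
    intro v hv0 hv1
    set S : Set ℝ := {x | g x ≤ v} with hSdef
    have hSclosed : IsClosed S := isClosed_Iic.preimage hgcont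
    rcases S.eq_empty_or_nonempty with hS | hS
    · have hv0' : v = 0 := by
        by_contra h
        obtain ⟨x, hx⟩ := hex_lt v (lt_of_le_of_ne hv0 (Ne.symm h))
        have : x ∈ S := hx.le
        rw [hS] at this
        exact this
      rw [hS, inter_empty, measure_empty, hv0', ENNReal.ofReal_zero]
    · obtain ⟨x₀, hx₀⟩ := hex_gt v hv1
      have hbdd : BddBelow S := by
        refine ⟨x₀, fun x hx => ?_⟩
        by_contra h
        push_neg at h
        exact absurd hx (not_le.mpr (hx₀.trans_le (hganti h.le)))
      set b := sInf S with hbdef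
      have hbS : b ∈ S := hSclosed.csInf_mem hS hbdd
      have hSeq : S = Ici b := by
        apply Subset.antisymm
        · intro x hx
          exact csInf_le hbdd hx
        · intro x hx
          exact le_trans (hganti hx) hbS
      have hgbv : g b = v := by
        refine le_antisymm hbS ?_
        have h1 : ∀ x ∈ Iio b, v ≤ g x := by
          intro x hx
          have hxS : x ∉ S := fun hxS => absurd (csInf_le hbdd hxS) (not_le.mpr hx)
          exact (not_le.mp hxS).le
        exact ge_of_tendsto ((hgcont.tendsto b).mono_left nhdsWithin_le_nhds)
          (eventually_nhdsWithin_of_forall h1)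
      have hMS : μ (M ∩ S) = G b := by rw [hSeq]
      rw [hMS, ← ENNReal.ofReal_toReal (hGT b)]
      congr 1
  -- the transform
  set T : ℝ → ℝ := fun x => (G x / c).toReal with hTdef
  have hTg : ∀ x, T x = g x / cR := fun x => ENNReal.toReal_div _ _
  have hTanti : Antitone T := by
    intro x y hxy
    rw [hTg, hTg]
    exact div_le_div_of_nonneg_right (hganti hxy) hcR0.le
  have hTmeas : Measurable T := hTanti.measurable
  -- identify the map
  have hfun : (fun ω => ((P {ω' | X ω' ∈ M ∧ X ω ≤ X ω'}) / (P (X ⁻¹' M))).toReal) = T ∘ X := by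
    funext ω
    have hset : {ω' | X ω' ∈ M ∧ X ω ≤ X ω'} = X ⁻¹' (M ∩ Ici (X ω)) := by
      ext ω'
      simp [mem_preimage, mem_inter_iff, mem_Ici]
    have h1 : P {ω' | X ω' ∈ M ∧ X ω ≤ X ω'} = G (X ω) := by
      rw [hset, ← hmap _ (hM.inter measurableSet_Ici)]
    simp only [Function.comp, hTdef, h1, hcP]
  rw [hfun]
  haveI : IsProbabilityMeasure (P[|X ⁻¹' M]) := cond_isProbabilityMeasure hpos.ne'
  haveI : IsProbabilityMeasure (Measure.map (T ∘ X) (P[|X ⁻¹' M])) :=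
    Measure.isProbabilityMeasure_map (hTmeas.comp hX).aemeasurable
  refine Measure.ext_of_Iic _ _ (fun t => ?_)
  rw [Measure.map_apply (hTmeas.comp hX) measurableSet_Iic]
  have hpre : (T ∘ X) ⁻¹' Iic t = X ⁻¹' (T ⁻¹' Iic t) := rfl
  rw [hpre, cond_apply (hX hM) P, ← Set.preimage_inter,
    ← hmap _ (hM.inter (hTmeas measurableSet_Iic)), ← hcP,
    Measure.restrict_apply measurableSet_Iic]
  rcases lt_or_ge t 0 with ht | ht
  · have h1 : T ⁻¹' Iic t = ∅ := by
      ext x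
      simp only [mem_preimage, mem_Iic, mem_empty_iff_false, iff_false, not_le]
      calc t < 0 := ht
        _ ≤ T x := ENNReal.toReal_nonneg
    have h2 : Iic t ∩ Icc (0:ℝ) 1 = ∅ := by
      ext x
      simp only [mem_inter_iff, mem_Iic, mem_Icc, mem_empty_iff_false, iff_false]
      rintro ⟨hx1, hx2, -⟩
      linarith
    rw [h1, h2, inter_empty, measure_empty, measure_empty, mul_zero]
  · rcases lt_or_ge t 1 with ht1 | ht1
    · have hset : T ⁻¹' Iic t = {x | g x ≤ t * cR} := by
        ext x
        simp only [mem_preimage, mem_Iic, mem_setOf_eq, hTg, div_le_iff₀ hcR0]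
      have hv1 : t * cR < cR := by nlinarith
      rw [hset, hkey (t * cR) (by positivity) hv1,
        ENNReal.ofReal_mul ht, ENNReal.ofReal_toReal hcT]
      have h2 : Iic t ∩ Icc (0:ℝ) 1 = Icc 0 t := by
        ext x
        simp only [mem_inter_iff, mem_Iic, mem_Icc]
        constructor
        · rintro ⟨h1, h2, -⟩; exact ⟨h2, h1⟩
        · rintro ⟨h1, h2⟩; exact ⟨h2, h1, by linarith⟩
      rw [h2, Real.volume_Icc, sub_zero, mul_comm (ENNReal.ofReal t) c, ← mul_assoc,
        ENNReal.inv_mul_cancel hc0 hcT, one_mul]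
    · have h1 : T ⁻¹' Iic t = univ := by
        ext x
        simp only [mem_preimage, mem_Iic, mem_univ, iff_true]
        calc T x = g x / cR := hTg x
          _ ≤ cR / cR := div_le_div_of_nonneg_right (hg_le x) hcR0.le
          _ = 1 := div_self hcR0.ne'
          _ ≤ t := ht1
      have h2 : Iic t ∩ Icc (0:ℝ) 1 = Icc 0 1 := by
        apply inter_eq_right.mpr
        intro x hx
        simp only [mem_Icc] at hx
        simp only [mem_Iic]
        linarith [hx.2]
      rw [h1, inter_univ, h2, ENNReal.inv_mul_cancel hc0 hcT, Real.volume_Icc, sub_zero,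
        ENNReal.ofReal_one]
end

section
/- Let Z₁, ..., Z_p be i.i.d. standard normal variables and let λ₁ ≥ λ₂ be the two largest values of |Z₁|, ..., |Z_p|. Then the statistic Φ̄(λ₁)/Φ̄(λ₂) is uniformly distributed on [0,1], where Φ̄ is the standard normal survival function. -/
open Real Filter MeasureTheory ProbabilityTheory

/-- Standard normal density. -/
noncomputable def stdNormalPdf (t : ℝ) : ℝ := (Real.sqrt (2 * Real.pi))⁻¹ * Real.exp (-t ^ 2 / 2)

/-- Standard normal survival function. -/
noncomputable def stdNormalSurv (t : ℝ) : ℝ := ∫ u in Set.Ioi t, stdNormalPdf u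

open Set Topology ENNReal
lemma stdNormalPdf_pos (t : ℝ) : 0 < stdNormalPdf t := by
  unfold stdNormalPdf
  positivity

lemma stdNormalPdf_le (t : ℝ) : stdNormalPdf t ≤ (Real.sqrt (2 * Real.pi))⁻¹ := by
  unfold stdNormalPdf
  have h1 : Real.exp (-t ^ 2 / 2) ≤ 1 := by
    rw [Real.exp_le_one_iff]; nlinarith [sq_nonneg t]
  have h2 : (0:ℝ) < (Real.sqrt (2 * Real.pi))⁻¹ := by positivity
  nlinarith

lemma integrable_stdNormalPdf : Integrable stdNormalPdf := by
  have := (integrable_exp_neg_mul_sq (b := (1:ℝ)/2) (by norm_num)).const_mul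
      (Real.sqrt (2 * Real.pi))⁻¹
  convert this using 2 with t
  unfold stdNormalPdf
  ring_nf

lemma stdNormalPdf_even (t : ℝ) : stdNormalPdf (-t) = stdNormalPdf t := by
  unfold stdNormalPdf; ring_nf

lemma continuous_stdNormalPdf : Continuous stdNormalPdf := by
  unfold stdNormalPdf; fun_prop

lemma stdNormalSurv_sub {a b : ℝ} (hab : a ≤ b) :
    stdNormalSurv a - stdNormalSurv b = ∫ u in Set.Ioc a b, stdNormalPdf u := by
  unfold stdNormalSurv
  have h : Set.Ioc a b ∪ Set.Ioi b = Set.Ioi a := Set.Ioc_union_Ioi_eq_Ioi hab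
  rw [← h, setIntegral_union (Set.Ioc_disjoint_Ioi le_rfl) measurableSet_Ioi
    integrable_stdNormalPdf.integrableOn integrable_stdNormalPdf.integrableOn]
  ring

lemma stdNormalSurv_strictAnti : StrictAnti stdNormalSurv := by
  intro a b hab
  have h := stdNormalSurv_sub hab.le
  have hpos : 0 < ∫ u in Set.Ioc a b, stdNormalPdf u := by
    rw [setIntegral_pos_iff_support_of_nonneg_ae]
    · have : Function.support stdNormalPdf = Set.univ := by
        ext t; simp [Function.mem_support, (stdNormalPdf_pos t).ne']
      rw [this, Set.univ_inter]
      simp [Real.volume_Ioc, hab]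
    · exact Filter.Eventually.of_forall fun t => (stdNormalPdf_pos t).le
    · exact integrable_stdNormalPdf.integrableOn
  linarith

lemma stdNormalSurv_nonneg (t : ℝ) : 0 ≤ stdNormalSurv t :=
  setIntegral_nonneg measurableSet_Ioi fun u _ => (stdNormalPdf_pos u).le

lemma stdNormalSurv_pos (t : ℝ) : 0 < stdNormalSurv t :=
  lt_of_le_of_lt (stdNormalSurv_nonneg (t+1)) (stdNormalSurv_strictAnti (by linarith))

lemma continuous_stdNormalSurv : Continuous stdNormalSurv := by
  have C := (Real.sqrt (2 * Real.pi))⁻¹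
  have key : ∀ a b : ℝ, a ≤ b →
      stdNormalSurv a - stdNormalSurv b ≤ (Real.sqrt (2 * Real.pi))⁻¹ * (b - a) := by
    intro a b hab
    rw [stdNormalSurv_sub hab]
    calc ∫ u in Set.Ioc a b, stdNormalPdf u
        ≤ ∫ _u in Set.Ioc a b, (Real.sqrt (2 * Real.pi))⁻¹ := by
          apply setIntegral_mono_on integrable_stdNormalPdf.integrableOn
            (integrableOn_const measure_Ioc_lt_top.ne)
            measurableSet_Ioc
          intro u _; exact stdNormalPdf_le u
      _ = (Real.sqrt (2 * Real.pi))⁻¹ * (b - a) := by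
          simp [Real.volume_Ioc, ENNReal.toReal_ofReal (by linarith : 0 ≤ b - a)]
          rw [max_eq_left (by linarith : (0:ℝ) ≤ b - a)]
          ring
  have hlip : LipschitzWith (Real.toNNReal (Real.sqrt (2 * Real.pi))⁻¹) stdNormalSurv := by
    apply LipschitzWith.of_dist_le_mul
    intro a b
    rcases le_total a b with hab | hab
    · rw [Real.dist_eq, Real.dist_eq, abs_of_nonneg (by
        have := stdNormalSurv_strictAnti.antitone hab; linarith), abs_of_nonpos (by linarith)]
      have := key a b hab
      have hc : (Real.toNNReal (Real.sqrt (2 * Real.pi))⁻¹ : ℝ) = (Real.sqrt (2 * Real.pi))⁻¹ :=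
        Real.coe_toNNReal _ (by positivity)
      rw [hc]; linarith
    · rw [Real.dist_eq, Real.dist_eq, abs_of_nonpos (by
        have := stdNormalSurv_strictAnti.antitone hab; linarith), abs_of_nonneg (by linarith)]
      have := key b a hab
      have hc : (Real.toNNReal (Real.sqrt (2 * Real.pi))⁻¹ : ℝ) = (Real.sqrt (2 * Real.pi))⁻¹ :=
        Real.coe_toNNReal _ (by positivity)
      rw [hc]; linarith
  exact hlip.continuous

lemma gaussianPDFReal_eq : gaussianPDFReal 0 1 = stdNormalPdf := by
  ext x
  unfold gaussianPDFReal stdNormalPdf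
  norm_num

lemma gauss_apply (s : Set ℝ) :
    gaussianReal 0 1 s = ENNReal.ofReal (∫ x in s, stdNormalPdf x) := by
  rw [gaussianReal_apply_eq_integral 0 one_ne_zero s, gaussianPDFReal_eq]

lemma gauss_Ioi (t : ℝ) : gaussianReal 0 1 (Set.Ioi t) = ENNReal.ofReal (stdNormalSurv t) :=
  gauss_apply _

lemma integral_Iic_neg (a : ℝ) : ∫ x in Set.Iic (-a), stdNormalPdf x = stdNormalSurv a := by
  rw [← integral_comp_neg_Ioi]
  unfold stdNormalSurv
  exact setIntegral_congr_fun measurableSet_Ioi fun x _ => stdNormalPdf_even x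

lemma gauss_Iic_neg (a : ℝ) :
    gaussianReal 0 1 (Set.Iic (-a)) = ENNReal.ofReal (stdNormalSurv a) := by
  rw [gauss_apply, integral_Iic_neg]

lemma stdNormalSurv_zero : stdNormalSurv 0 = 1 / 2 := by
  have h1 : gaussianReal 0 1 (Set.Iic 0) + gaussianReal 0 1 (Set.Ioi 0) = 1 := by
    rw [← measure_union (Set.Iic_disjoint_Ioi le_rfl) measurableSet_Ioi, Set.Iic_union_Ioi,
      measure_univ]
  have h2 : gaussianReal 0 1 (Set.Iic 0) = ENNReal.ofReal (stdNormalSurv 0) := by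
    have := gauss_Iic_neg 0; simpa using this
  rw [h2, gauss_Ioi, ← ENNReal.ofReal_add (stdNormalSurv_nonneg 0) (stdNormalSurv_nonneg 0)]
    at h1
  have h3 : stdNormalSurv 0 + stdNormalSurv 0 = 1 := by
    have := ENNReal.ofReal_eq_one.mp h1
    linarith
  linarith

lemma exists_surv_lt {s : ℝ} (hs : 0 < s) : ∃ n : ℕ, stdNormalSurv n < s := by
  have h1 : Tendsto (fun n : ℕ => gaussianReal 0 1 (Set.Ioi (n : ℝ))) atTop
      (𝓝 (gaussianReal 0 1 (⋂ n : ℕ, Set.Ioi (n : ℝ)))) := by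
    apply tendsto_measure_iInter_atTop (fun n => measurableSet_Ioi.nullMeasurableSet)
    · intro m n hmn
      exact Set.Ioi_subset_Ioi (by exact_mod_cast hmn)
    · exact ⟨0, measure_ne_top _ _⟩
  have h2 : (⋂ n : ℕ, Set.Ioi (n : ℝ)) = ∅ := by
    ext x
    simp only [Set.mem_iInter, Set.mem_Ioi, Set.mem_empty_iff_false, iff_false, not_forall,
      not_lt]
    obtain ⟨n, hn⟩ := exists_nat_gt x
    exact ⟨n, hn.le⟩
  rw [h2, measure_empty] at h1
  have h3 : ∀ᶠ n : ℕ in atTop, gaussianReal 0 1 (Set.Ioi (n : ℝ)) < ENNReal.ofReal s :=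
    h1.eventually_lt_const (by simpa using hs)
  obtain ⟨n, hn⟩ := h3.exists
  refine ⟨n, ?_⟩
  rw [gauss_Ioi] at hn
  exact (ENNReal.ofReal_lt_ofReal_iff hs).mp hn

lemma exists_surv_eq {s : ℝ} (h1 : 0 < s) (h2 : s < 1 / 2) :
    ∃ a : ℝ, 0 < a ∧ stdNormalSurv a = s := by
  obtain ⟨n, hn⟩ := exists_surv_lt h1
  have hmem : s ∈ Set.Icc (stdNormalSurv n) (stdNormalSurv 0) := by
    rw [stdNormalSurv_zero]; exact ⟨hn.le, h2.le⟩
  have := intermediate_value_Icc' (by positivity : (0:ℝ) ≤ n)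
    continuous_stdNormalSurv.continuousOn hmem
  obtain ⟨a, _, ha⟩ := this
  refine ⟨a, ?_, ha⟩
  by_contra h
  push_neg at h
  have : stdNormalSurv 0 ≤ stdNormalSurv a := stdNormalSurv_strictAnti.antitone h
  rw [stdNormalSurv_zero, ha] at this
  linarith

noncomputable def gTrans (t : ℝ) : ℝ := 2 * stdNormalSurv |t|

lemma continuous_gTrans : Continuous gTrans :=
  (continuous_const.mul (continuous_stdNormalSurv.comp continuous_abs))

lemma measurable_gTrans : Measurable gTrans := continuous_gTrans.measurable

lemma gTrans_pos (t : ℝ) : 0 < gTrans t := by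
  unfold gTrans; have := stdNormalSurv_pos |t|; linarith

lemma gTrans_le_one (t : ℝ) : gTrans t ≤ 1 := by
  unfold gTrans
  have h : stdNormalSurv |t| ≤ stdNormalSurv 0 := stdNormalSurv_strictAnti.antitone (abs_nonneg t)
  rw [stdNormalSurv_zero] at h; linarith

instance uIoc01_prob : IsProbabilityMeasure (volume.restrict (Set.Ioc (0:ℝ) 1)) := by
  constructor
  simp [Real.volume_Ioc]

lemma map_gTrans : Measure.map gTrans (gaussianReal 0 1) = volume.restrict (Set.Ioc (0:ℝ) 1) := by
  haveI : IsProbabilityMeasure (Measure.map gTrans (gaussianReal 0 1)) :=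
    Measure.isProbabilityMeasure_map measurable_gTrans.aemeasurable
  refine Measure.ext_of_Iic _ _ fun x => ?_
  rw [Measure.map_apply measurable_gTrans measurableSet_Iic]
  rcases le_or_gt x 0 with hx | hx
  · have h1 : gTrans ⁻¹' Set.Iic x = ∅ := by
      ext t; simp only [Set.mem_preimage, Set.mem_Iic, Set.mem_empty_iff_false, iff_false, not_le]
      exact lt_of_le_of_lt hx (gTrans_pos t)
    have h2 : Set.Ioc (0:ℝ) 1 ∩ Set.Iic x = ∅ := by
      ext t; simp only [Set.mem_inter_iff, Set.mem_Ioc, Set.mem_Iic, Set.mem_empty_iff_false,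
        iff_false]
      rintro ⟨⟨h3, _⟩, h4⟩; linarith
    rw [h1, Measure.restrict_apply measurableSet_Iic, Set.inter_comm, h2]
    simp
  rcases le_or_gt 1 x with hx1 | hx1
  · have h1 : gTrans ⁻¹' Set.Iic x = Set.univ := by
      ext t; simp only [Set.mem_preimage, Set.mem_Iic, Set.mem_univ, iff_true]
      exact (gTrans_le_one t).trans hx1
    have h2 : Set.Ioc (0:ℝ) 1 ∩ Set.Iic x = Set.Ioc 0 1 := by
      apply Set.inter_eq_self_of_subset_left
      intro t ht; exact ht.2.trans hx1
    rw [h1, Measure.restrict_apply measurableSet_Iic, Set.inter_comm, h2]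
    simp [Real.volume_Ioc]
  · -- 0 < x < 1
    obtain ⟨a, ha0, ha⟩ := exists_surv_eq (by linarith : 0 < x / 2) (by linarith)
    have h1 : gTrans ⁻¹' Set.Iic x = Set.Iic (-a) ∪ Set.Ioi a ∪ {a} := by
      ext t
      simp only [Set.mem_preimage, Set.mem_Iic, Set.mem_union, Set.mem_Ioi, Set.mem_singleton_iff]
      constructor
      · intro h
        have h2 : stdNormalSurv |t| ≤ stdNormalSurv a := by unfold gTrans at h; linarith [ha]
        have h3 : a ≤ |t| := stdNormalSurv_strictAnti.le_iff_ge.mp h2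
        rcases le_or_gt t 0 with ht | ht
        · left; left
          rw [abs_of_nonpos ht] at h3; linarith
        · rw [abs_of_pos ht] at h3
          rcases eq_or_lt_of_le h3 with h4 | h4
          · right; exact h4.symm
          · left; right; exact h4
      · intro h
        have h3 : a ≤ |t| := by
          rcases h with (h | h) | h
          · rw [abs_of_nonpos (by linarith)]; linarith
          · rw [abs_of_pos (by linarith)]; exact h.le
          · rw [h, abs_of_pos ha0]
        have h2 : stdNormalSurv |t| ≤ stdNormalSurv a := stdNormalSurv_strictAnti.antitone h3
        unfold gTrans; linarith [ha]
    rw [h1]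
    have hsing : gaussianReal 0 1 {a} = 0 :=
      gaussianReal_absolutelyContinuous 0 one_ne_zero (volume_singleton)
    have hdisj : Disjoint (Set.Iic (-a)) (Set.Ioi a) := by
      apply Set.Iic_disjoint_Ioi; linarith
    have hdisj2 : Disjoint (Set.Iic (-a) ∪ Set.Ioi a) ({a} : Set ℝ) := by
      rw [Set.disjoint_singleton_right]
      simp only [Set.mem_union, Set.mem_Iic, Set.mem_Ioi, not_or, not_le, not_lt]
      constructor <;> linarith
    rw [measure_union hdisj2 (measurableSet_singleton a), hsing, add_zero,
      measure_union hdisj measurableSet_Ioi, gauss_Iic_neg, gauss_Ioi,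
      ha, ← ENNReal.ofReal_add (by linarith) (by linarith)]
    have h2 : Set.Ioc (0:ℝ) 1 ∩ Set.Iic x = Set.Ioc 0 x := by
      ext t; simp only [Set.mem_inter_iff, Set.mem_Ioc, Set.mem_Iic]
      constructor
      · rintro ⟨⟨h3, _⟩, h4⟩; exact ⟨h3, h4⟩
      · rintro ⟨h3, h4⟩; exact ⟨⟨h3, by linarith⟩, h4⟩
    rw [Measure.restrict_apply measurableSet_Iic, Set.inter_comm, h2]
    rw [Real.volume_Ioc]
    norm_num

lemma antitone_map_ciSup_finite {ι : Type*} [Finite ι] [Nonempty ι] {f : ℝ → ℝ}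
    (hf : Antitone f) (a : ι → ℝ) : f (⨆ i, a i) = ⨅ i, f (a i) := by
  obtain ⟨i₀, h⟩ := exists_eq_ciSup_of_finite (f := a)
  have hle : ∀ j, a j ≤ a i₀ := fun j => h ▸ le_ciSup (Set.finite_range a).bddAbove j
  rw [← h]
  refine le_antisymm (le_ciInf fun j => hf (hle j)) (ciInf_le (Set.finite_range _).bddBelow i₀)

lemma lt_ciInf_finite {ι : Type*} [Finite ι] [Nonempty ι] {a : ι → ℝ} {t : ℝ} :
    t < ⨅ i, a i ↔ ∀ i, t < a i := by
  constructor
  · intro h i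
    exact h.trans_le (ciInf_le (Set.finite_range a).bddBelow i)
  · intro h
    obtain ⟨i₀, hi₀⟩ := exists_eq_ciInf_of_finite (f := a)
    rw [← hi₀]; exact h i₀

lemma ciInf_le_finite {ι : Type*} [Finite ι] [Nonempty ι] (a : ι → ℝ) (i : ι) :
    ⨅ j, a j ≤ a i := ciInf_le (Set.finite_range a).bddBelow i

lemma measurable_finset_inf' {ι α : Type*} [MeasurableSpace α] {t : Finset ι} (ht : t.Nonempty)
    (f : ι → α → ℝ) (hf : ∀ i, Measurable (f i)) :
    Measurable fun a => t.inf' ht fun i => f i a := by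
  induction ht using Finset.Nonempty.cons_induction with
  | singleton i => simpa using hf i
  | cons i s his hs ih =>
    have : (fun a => (Finset.cons i s his).inf' (Finset.cons_nonempty his) fun j => f j a)
        = fun a => min (f i a) (s.inf' hs fun j => f j a) := by
      ext a; rw [Finset.inf'_cons hs]
    rw [this]
    exact (hf i).min ih

lemma measurable_ciInf {ι α : Type*} [Fintype ι] [Nonempty ι] [MeasurableSpace α]
    (f : ι → α → ℝ) (hf : ∀ i, Measurable (f i)) :
    Measurable fun a => ⨅ i, f i a := by
  have : (fun a => ⨅ i, f i a)
      = fun a => Finset.univ.inf' Finset.univ_nonempty fun i => f i a := by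
    ext a; exact (Finset.inf'_univ_eq_ciInf _).symm
  rw [this]
  exact measurable_finset_inf' _ f hf

lemma lintegral_min_pi {ι : Type*} [Fintype ι] [Nonempty ι] :
    ∫⁻ u : ι → ℝ, ENNReal.ofReal (max (⨅ j, u j) 0)
        ∂(Measure.pi fun _ : ι => volume.restrict (Set.Ioc (0:ℝ) 1))
      = ENNReal.ofReal (1 / (Fintype.card ι + 1)) := by
  set k := Fintype.card ι with hk
  have hkpos : 0 < k := Fintype.card_pos
  have hmble : Measurable fun u : ι → ℝ => max (⨅ j, u j) 0 :=
    (measurable_ciInf (fun j (u : ι → ℝ) => u j) fun j => measurable_pi_apply j).max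
      measurable_const
  rw [lintegral_eq_lintegral_meas_lt (f := fun u : ι → ℝ => max (⨅ j, u j) 0) _
    (Filter.Eventually.of_forall fun u => le_max_right _ _) hmble.aemeasurable]
  have hstep1 : ∫⁻ t in Set.Ioi (0:ℝ),
      (Measure.pi fun _ : ι => volume.restrict (Set.Ioc (0:ℝ) 1))
        {u : ι → ℝ | t < max (⨅ j, u j) 0}
      = ∫⁻ t in Set.Ioi (0:ℝ), (ENNReal.ofReal (1 - t)) ^ k := by
    apply setLIntegral_congr_fun measurableSet_Ioi
    intro t ht
    dsimp only
    have hset : {u : ι → ℝ | t < max (⨅ j, u j) 0}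
        = Set.pi Set.univ fun _ : ι => Set.Ioi t := by
      ext u
      simp only [Set.mem_setOf_eq, Set.mem_pi, Set.mem_univ, forall_true_left, Set.mem_Ioi]
      constructor
      · intro h
        have h2 : t < ⨅ j, u j := by
          rcases lt_max_iff.mp h with h | h
          · exact h
          · exact absurd ht (by simp only [Set.mem_Ioi]; linarith)
        exact fun j => lt_ciInf_finite.mp h2 j
      · intro h
        exact lt_max_iff.mpr (Or.inl (lt_ciInf_finite.mpr h))
    rw [hset, Measure.pi_pi]
    have hIoi : Set.Ioi t ∩ Set.Ioc (0:ℝ) 1 = Set.Ioc t 1 := by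
      ext y
      simp only [Set.mem_inter_iff, Set.mem_Ioi, Set.mem_Ioc]
      have ht' : (0:ℝ) < t := ht
      constructor
      · rintro ⟨h1, _, h3⟩; exact ⟨h1, h3⟩
      · rintro ⟨h1, h2⟩; exact ⟨h1, by linarith, h2⟩
    rw [Finset.prod_const]
    rw [Measure.restrict_apply measurableSet_Ioi, hIoi, Real.volume_Ioc]
    simp [hk]
  rw [hstep1]
  have hsplit : Set.Ioi (0:ℝ) = Set.Ioc (0:ℝ) 1 ∪ Set.Ioi 1 :=
    (Set.Ioc_union_Ioi_eq_Ioi zero_le_one).symm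
  rw [hsplit, lintegral_union measurableSet_Ioi (Set.Ioc_disjoint_Ioi le_rfl)]
  have hzero : ∫⁻ t in Set.Ioi (1:ℝ), (ENNReal.ofReal (1 - t)) ^ k = 0 := by
    rw [setLIntegral_congr_fun measurableSet_Ioi ?_,
      lintegral_zero]
    intro t ht
    dsimp only
    have : ENNReal.ofReal (1 - t) = 0 := by
      rw [ENNReal.ofReal_eq_zero]
      have : (1:ℝ) < t := ht
      linarith
    rw [this, zero_pow hkpos.ne']
  rw [hzero, add_zero]
  have hcongr : ∫⁻ t in Set.Ioc (0:ℝ) 1, (ENNReal.ofReal (1 - t)) ^ k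
      = ∫⁻ t in Set.Ioc (0:ℝ) 1, ENNReal.ofReal ((1 - t) ^ k) := by
    apply setLIntegral_congr_fun measurableSet_Ioc
    intro t ht
    dsimp only
    rw [ENNReal.ofReal_pow]
    have : t ≤ 1 := ht.2
    linarith
  rw [hcongr]
  rw [← ofReal_integral_eq_lintegral_ofReal]
  · congr 1
    rw [← intervalIntegral.integral_of_le zero_le_one]
    have := intervalIntegral.integral_comp_sub_left (a := (0:ℝ)) (b := 1)
      (fun x => x ^ k) 1
    rw [this]
    norm_num [integral_pow]
  · exact ((continuous_const.sub continuous_id).pow k).integrableOn_Ioc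
  · filter_upwards [ae_restrict_mem measurableSet_Ioc] with t ht
    have h1 : t ≤ 1 := ht.2
    have h2 : (0:ℝ) ≤ 1 - t := by linarith
    positivity

lemma mu0_Iic {c : ℝ} (hc : c ≤ 1) :
    (volume.restrict (Set.Ioc (0:ℝ) 1)) (Set.Iic c) = ENNReal.ofReal c := by
  rw [Measure.restrict_apply measurableSet_Iic]
  have h : Set.Iic c ∩ Set.Ioc 0 1 = Set.Ioc 0 c := by
    ext t
    simp only [Set.mem_inter_iff, Set.mem_Iic, Set.mem_Ioc]
    constructor
    · rintro ⟨h1, h2, _⟩; exact ⟨h2, h1⟩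
    · rintro ⟨h1, h2⟩; exact ⟨h2, h1, by linarith⟩
  rw [h, Real.volume_Ioc, sub_zero]

lemma pi_box_compl_null {ι : Type*} [Fintype ι] :
    (Measure.pi fun _ : ι => volume.restrict (Set.Ioc (0:ℝ) 1))
      (Set.pi Set.univ fun _ : ι => Set.Ioc (0:ℝ) 1)ᶜ = 0 := by
  have h : (Measure.pi fun _ : ι => volume.restrict (Set.Ioc (0:ℝ) 1))
      (Set.pi Set.univ fun _ : ι => Set.Ioc (0:ℝ) 1) = 1 := by
    rw [Measure.pi_pi]
    simp [Measure.restrict_apply measurableSet_Ioc, Real.volume_Ioc]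
  rw [measure_compl (MeasurableSet.univ_pi fun _ => measurableSet_Ioc) (by simp [h]), h]
  simp

lemma measure_B {p : ℕ} (hp : 2 ≤ p) (i : Fin p) {x : ℝ} (hx0 : 0 ≤ x) (hx1 : x ≤ 1) :
    (Measure.pi fun _ : Fin p => volume.restrict (Set.Ioc (0:ℝ) 1))
      {s : Fin p → ℝ | s i ≤ x * ⨅ j : {j : Fin p // j ≠ i}, s (j : Fin p)}
      = ENNReal.ofReal (x * (1 / p)) := by
  haveI : Nontrivial (Fin p) := Fin.nontrivial_iff_two_le.mpr hp
  haveI hne : Nonempty {j : Fin p // j ≠ i} := by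
    obtain ⟨j, hj⟩ := exists_ne i
    exact ⟨⟨j, hj⟩⟩
  set μ₀ : Measure ℝ := volume.restrict (Set.Ioc (0:ℝ) 1) with hμ₀
  set M : ({j : Fin p // j ≠ i} → ℝ) → ℝ := fun u => ⨅ j, u j with hM
  have hMmble : Measurable M :=
    measurable_ciInf (fun j (u : {j : Fin p // j ≠ i} → ℝ) => u j) fun j => measurable_pi_apply j
  have hBmble : MeasurableSet
      {s : Fin p → ℝ | s i ≤ x * ⨅ j : {j : Fin p // j ≠ i}, s (j : Fin p)} := by
    apply measurableSet_le (measurable_pi_apply i)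
    exact measurable_const.mul
      (measurable_ciInf (fun (j : {j : Fin p // j ≠ i}) (s : Fin p → ℝ) => s (j : Fin p))
        fun j => measurable_pi_apply _)
  set e := MeasurableEquiv.piEquivPiSubtypeProd (fun _ : Fin p => ℝ) (· = i) with he
  have hpres := measurePreserving_piEquivPiSubtypeProd (fun _ : Fin p => μ₀) (· = i)
  have hpres' := hpres.symm e
  set S : Set ((({j : Fin p // j = i} → ℝ) × ({j : Fin p // j ≠ i} → ℝ))) :=
    {z | z.1 ⟨i, rfl⟩ ≤ x * M z.2} with hS
  have hSmble : MeasurableSet S := by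
    apply measurableSet_le
    · exact (measurable_pi_apply _).comp measurable_fst
    · exact (measurable_const.mul hMmble).comp measurable_snd
  have hpre : e.symm ⁻¹' {s : Fin p → ℝ | s i ≤ x * ⨅ j : {j : Fin p // j ≠ i}, s (j : Fin p)}
      = S := by
    ext z
    have hcoord : ∀ j : Fin p, e.symm z j = if h : j = i then z.1 ⟨j, h⟩ else z.2 ⟨j, h⟩ :=
      fun j => rfl
    simp only [Set.mem_preimage, Set.mem_setOf_eq, hS]
    have h1 : e.symm z i = z.1 ⟨i, rfl⟩ := by rw [hcoord i, dif_pos rfl]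
    have h2 : (⨅ j : {j : Fin p // j ≠ i}, e.symm z (j : Fin p)) = M z.2 := by
      apply iInf_congr
      intro j
      rw [hcoord j, dif_neg j.2]
    rw [h1, h2]
  rw [← hpres'.measure_preimage hBmble.nullMeasurableSet, hpre,
    Measure.prod_apply_symm hSmble]
  -- inner measure
  have hinner : ∀ u : {j : Fin p // j ≠ i} → ℝ, x * M u ≤ 1 →
      (Measure.pi fun _ : {j : Fin p // j = i} => μ₀)
        ((fun a => (a, u)) ⁻¹' S) = ENNReal.ofReal (x * M u) := by
    intro u hu
    have hset : ((fun a => (a, u)) ⁻¹' S)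
        = Set.pi Set.univ fun _ : {j : Fin p // j = i} => Set.Iic (x * M u) := by
      ext a
      simp only [Set.mem_preimage, hS, Set.mem_setOf_eq, Set.mem_pi, Set.mem_univ,
        forall_true_left, Set.mem_Iic]
      constructor
      · intro h j
        have : j = ⟨i, rfl⟩ := Subtype.ext j.2
        rw [this]; exact h
      · intro h; exact h ⟨i, rfl⟩
    rw [hset, Measure.pi_pi, Finset.prod_const]
    have hcard1 : Fintype.card {j : Fin p // j = i} = 1 := Fintype.card_subtype_eq i
    rw [Finset.card_univ, hcard1, pow_one]
    exact mu0_Iic hu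
  -- a.e. bound on u
  have hbox : ∀ u ∈ (Set.pi Set.univ fun _ : {j : Fin p // j ≠ i} => Set.Ioc (0:ℝ) 1),
      0 ≤ M u ∧ M u ≤ 1 := by
    intro u hu
    constructor
    · obtain ⟨j₀, hj₀⟩ := exists_eq_ciInf_of_finite (f := u)
      show (0:ℝ) ≤ ⨅ j, u j
      rw [← hj₀]
      exact (hu j₀ (Set.mem_univ _)).1.le
    · have j := Classical.arbitrary {j : Fin p // j ≠ i}
      exact (ciInf_le_finite u j).trans (hu j (Set.mem_univ _)).2
  have hae : ∫⁻ u, (Measure.pi fun _ : {j : Fin p // j = i} => μ₀) ((fun a => (a, u)) ⁻¹' S)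
        ∂(Measure.pi fun _ : {j : Fin p // j ≠ i} => μ₀)
      = ∫⁻ u, ENNReal.ofReal x * ENNReal.ofReal (max (M u) 0)
        ∂(Measure.pi fun _ : {j : Fin p // j ≠ i} => μ₀) := by
    apply lintegral_congr_ae
    have hcompl := pi_box_compl_null (ι := {j : Fin p // j ≠ i})
    rw [Filter.EventuallyEq, ae_iff]
    apply measure_mono_null ?_ hcompl
    intro u hu
    simp only [Set.mem_setOf_eq] at hu
    simp only [Set.mem_compl_iff]
    intro humem
    apply hu
    obtain ⟨hM0, hM1⟩ := hbox u humem
    rw [hinner u (by nlinarith), max_eq_left hM0, ENNReal.ofReal_mul hx0]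
  have hrest : ∫⁻ u, ENNReal.ofReal x * ENNReal.ofReal (max (M u) 0)
        ∂(Measure.pi fun _ : {j : Fin p // j ≠ i} => μ₀)
      = ENNReal.ofReal (x * (1 / p)) := by
    rw [lintegral_const_mul _ (by
      exact (ENNReal.measurable_ofReal.comp (hMmble.max measurable_const))),
      lintegral_min_pi]
    rw [← ENNReal.ofReal_mul hx0]
    congr 2
    have h1 : Fintype.card {j : Fin p // j ≠ i} = p - 1 := by
      rw [Fintype.card_subtype_compl]
      simp
    rw [h1]
    have h2 : 1 ≤ p := by omega
    push_cast [Nat.cast_sub h2]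
    ring
  convert hae.trans hrest using 2
  congr!

lemma pair_nonempty {p : ℕ} (hp : 2 ≤ p) : Nonempty {q : Fin p × Fin p // q.1 ≠ q.2} := by
  haveI : Nontrivial (Fin p) := Fin.nontrivial_iff_two_le.mpr hp
  obtain ⟨a, b, hab⟩ := exists_pair_ne (Fin p)
  exact ⟨⟨(a, b), hab⟩⟩

lemma m2_eq {p : ℕ} (hp : 2 ≤ p) {s : Fin p → ℝ} {i : Fin p} (h : ∀ j, s i ≤ s j) :
    (⨅ q : {q : Fin p × Fin p // q.1 ≠ q.2}, max (s q.1.1) (s q.1.2))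
      = ⨅ j : {j : Fin p // j ≠ i}, s (j : Fin p) := by
  haveI : Nontrivial (Fin p) := Fin.nontrivial_iff_two_le.mpr hp
  haveI := pair_nonempty hp
  haveI : Nonempty {j : Fin p // j ≠ i} := by
    obtain ⟨j, hj⟩ := exists_ne i
    exact ⟨⟨j, hj⟩⟩
  apply le_antisymm
  · apply le_ciInf
    intro j
    calc (⨅ q : {q : Fin p × Fin p // q.1 ≠ q.2}, max (s q.1.1) (s q.1.2))
        ≤ max (s (j : Fin p)) (s i) :=
          ciInf_le_finite (fun q : {q : Fin p × Fin p // q.1 ≠ q.2} =>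
            max (s q.1.1) (s q.1.2)) ⟨((j : Fin p), i), j.2⟩
      _ = s (j : Fin p) := max_eq_left (h _)
  · apply le_ciInf
    intro q
    rcases ne_or_eq q.1.1 i with h1 | h1
    · exact (ciInf_le_finite (fun j : {j : Fin p // j ≠ i} => s (j : Fin p))
        ⟨q.1.1, h1⟩).trans (le_max_left _ _)
    · have h2 : q.1.2 ≠ i := fun he => q.2 (h1.trans he.symm)
      exact (ciInf_le_finite (fun j : {j : Fin p // j ≠ i} => s (j : Fin p))
        ⟨q.1.2, h2⟩).trans (le_max_right _ _)

theorem map_Fstat {p : ℕ} (hp : 2 ≤ p) :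
    Measure.map (fun s : Fin p → ℝ =>
        (⨅ i, s i) / ⨅ q : {q : Fin p × Fin p // q.1 ≠ q.2}, max (s q.1.1) (s q.1.2))
      (Measure.pi fun _ : Fin p => volume.restrict (Set.Ioc (0:ℝ) 1))
      = volume.restrict (Set.Icc (0:ℝ) 1) := by
  haveI : Nontrivial (Fin p) := Fin.nontrivial_iff_two_le.mpr hp
  haveI : Nonempty (Fin p) := ⟨⟨0, by omega⟩⟩
  haveI hqne := pair_nonempty hp
  haveI hjne : ∀ i : Fin p, Nonempty {j : Fin p // j ≠ i} := fun i => by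
    obtain ⟨j, hj⟩ := exists_ne i
    exact ⟨⟨j, hj⟩⟩
  set ν := Measure.pi fun _ : Fin p => volume.restrict (Set.Ioc (0:ℝ) 1) with hν
  set m1 : (Fin p → ℝ) → ℝ := fun s => ⨅ i, s i with hm1
  set m2 : (Fin p → ℝ) → ℝ := fun s =>
    ⨅ q : {q : Fin p × Fin p // q.1 ≠ q.2}, max (s q.1.1) (s q.1.2) with hm2
  have hm1mble : Measurable m1 :=
    measurable_ciInf (fun i (s : Fin p → ℝ) => s i) fun i => measurable_pi_apply i
  have hm2mble : Measurable m2 :=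
    measurable_ciInf (fun (q : {q : Fin p × Fin p // q.1 ≠ q.2}) (s : Fin p → ℝ) =>
        max (s q.1.1) (s q.1.2))
      fun q => (measurable_pi_apply _).max (measurable_pi_apply _)
  have hF : Measurable fun s : Fin p → ℝ => m1 s / m2 s := hm1mble.div hm2mble
  set box := Set.pi Set.univ fun _ : Fin p => Set.Ioc (0:ℝ) 1 with hbox
  have hboxc : ν boxᶜ = 0 := pi_box_compl_null
  have hboxmble : MeasurableSet box := MeasurableSet.univ_pi fun _ => measurableSet_Ioc
  have hboxval : ν box = 1 := by
    rw [hν, Measure.pi_pi]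
    simp [Measure.restrict_apply measurableSet_Ioc, Real.volume_Ioc]
  -- facts on box
  have hm1pos : ∀ s ∈ box, 0 < m1 s := by
    intro s hs
    obtain ⟨i₀, hi₀⟩ := exists_eq_ciInf_of_finite (f := s)
    show (0:ℝ) < ⨅ i, s i
    rw [← hi₀]
    exact (hs i₀ (Set.mem_univ _)).1
  have hm1le : ∀ s : Fin p → ℝ, m1 s ≤ m2 s := by
    intro s
    apply le_ciInf
    intro q
    exact (ciInf_le_finite s q.1.1).trans (le_max_left _ _)
  have hm2pos : ∀ s ∈ box, 0 < m2 s := fun s hs => lt_of_lt_of_le (hm1pos s hs) (hm1le s)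
  haveI : IsProbabilityMeasure ν := by rw [hν]; infer_instance
  haveI : IsProbabilityMeasure (Measure.map (fun s : Fin p → ℝ => m1 s / m2 s) ν) :=
    Measure.isProbabilityMeasure_map hF.aemeasurable
  refine Measure.ext_of_Iic _ _ fun x => ?_
  rw [Measure.map_apply hF measurableSet_Iic]
  rcases le_or_gt x 0 with hx0 | hx0
  · -- x ≤ 0 : both sides are 0 (for x < 0) or 0 (x = 0)
    have hpre : (fun s : Fin p → ℝ => m1 s / m2 s) ⁻¹' Set.Iic x ∩ box = ∅ := by
      ext s
      simp only [Set.mem_inter_iff, Set.mem_preimage, Set.mem_Iic, Set.mem_empty_iff_false,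
        iff_false, not_and]
      intro hle hsbox
      have := div_pos (hm1pos s hsbox) (hm2pos s hsbox)
      linarith
    rw [← measure_inter_conull hboxc, hpre, measure_empty]
    rw [Measure.restrict_apply measurableSet_Iic]
    have : Set.Iic x ∩ Set.Icc (0:ℝ) 1 ⊆ {0} := by
      intro t ht
      have h1 : t ≤ x := ht.1
      have h2 : (0:ℝ) ≤ t := ht.2.1
      have h3 : t = 0 := le_antisymm (by linarith) h2
      simp [h3]
    symm
    exact measure_mono_null this volume_singleton
  rcases le_or_gt 1 x with hx1 | hx1
  · -- x ≥ 1
    have hsub : box ⊆ (fun s : Fin p → ℝ => m1 s / m2 s) ⁻¹' Set.Iic x := by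
      intro s hs
      simp only [Set.mem_preimage, Set.mem_Iic]
      have h1 : m1 s / m2 s ≤ 1 := (div_le_one (hm2pos s hs)).mpr (hm1le s)
      linarith
    have hge : (1:ℝ≥0∞) ≤ ν ((fun s : Fin p → ℝ => m1 s / m2 s) ⁻¹' Set.Iic x) :=
      hboxval ▸ measure_mono hsub
    have hle : ν ((fun s : Fin p → ℝ => m1 s / m2 s) ⁻¹' Set.Iic x) ≤ 1 :=
      prob_le_one
    rw [le_antisymm hle hge]
    rw [Measure.restrict_apply measurableSet_Iic]
    have : Set.Iic x ∩ Set.Icc (0:ℝ) 1 = Set.Icc 0 1 := by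
      apply Set.inter_eq_self_of_subset_right
      intro t ht
      exact le_trans ht.2 hx1
    rw [this, Real.volume_Icc]
    norm_num
  · -- 0 < x < 1
    set B : Fin p → Set (Fin p → ℝ) := fun i =>
      {s : Fin p → ℝ | s i ≤ x * ⨅ j : {j : Fin p // j ≠ i}, s (j : Fin p)} with hB
    have hBmble : ∀ i, MeasurableSet (B i) := by
      intro i
      apply measurableSet_le (measurable_pi_apply i)
      exact measurable_const.mul
        (measurable_ciInf (fun (j : {j : Fin p // j ≠ i}) (s : Fin p → ℝ) => s (j : Fin p))
          fun j => measurable_pi_apply _)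
    have hMi_pos : ∀ (i : Fin p) (s : Fin p → ℝ), s ∈ box →
        0 < ⨅ j : {j : Fin p // j ≠ i}, s (j : Fin p) := by
      intro i s hs
      obtain ⟨j₀, hj₀⟩ := exists_eq_ciInf_of_finite
        (f := fun j : {j : Fin p // j ≠ i} => s (j : Fin p))
      rw [← hj₀]
      exact (hs (j₀ : Fin p) (Set.mem_univ _)).1
    have hEq : (fun s : Fin p → ℝ => m1 s / m2 s) ⁻¹' Set.Iic x ∩ box
        = (⋃ i, B i) ∩ box := by
      ext s
      simp only [Set.mem_inter_iff, Set.mem_preimage, Set.mem_Iic, Set.mem_iUnion]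
      constructor
      · rintro ⟨hle, hsbox⟩
        refine ⟨?_, hsbox⟩
        obtain ⟨i₀, hi₀⟩ := exists_eq_ciInf_of_finite (f := s)
        have hmin : ∀ j, s i₀ ≤ s j := by
          intro j
          rw [hi₀]
          exact ciInf_le_finite s j
        refine ⟨i₀, ?_⟩
        have h2 : m2 s = ⨅ j : {j : Fin p // j ≠ i₀}, s (j : Fin p) := m2_eq hp hmin
        have h3 : m1 s = s i₀ := by rw [hm1]; exact hi₀.symm
        have h4 := hMi_pos i₀ s hsbox
        rw [h3, h2] at hle
        rw [hB]
        simp only [Set.mem_setOf_eq]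
        rw [div_le_iff₀ h4] at hle
        linarith [hle]
      · rintro ⟨⟨i, hi⟩, hsbox⟩
        refine ⟨?_, hsbox⟩
        simp only [hB, Set.mem_setOf_eq] at hi
        have h4 := hMi_pos i s hsbox
        have hmin : ∀ j, s i ≤ s j := by
          intro j
          rcases eq_or_ne j i with rfl | hj
          · exact le_rfl
          · calc s i ≤ x * ⨅ j' : {j' : Fin p // j' ≠ i}, s (j' : Fin p) := hi
              _ ≤ 1 * ⨅ j' : {j' : Fin p // j' ≠ i}, s (j' : Fin p) := by
                  apply mul_le_mul_of_nonneg_right hx1.le h4.le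
              _ = ⨅ j' : {j' : Fin p // j' ≠ i}, s (j' : Fin p) := one_mul _
              _ ≤ s j := ciInf_le_finite
                  (fun j' : {j' : Fin p // j' ≠ i} => s (j' : Fin p)) ⟨j, hj⟩
        have h2 : m2 s = ⨅ j : {j : Fin p // j ≠ i}, s (j : Fin p) := m2_eq hp hmin
        have h3 : m1 s = s i := by
          rw [hm1]
          apply le_antisymm (ciInf_le_finite s i) (le_ciInf hmin)
        rw [h3, h2, div_le_iff₀ h4]
        exact hi
    have hdisj : Pairwise (Function.onFun Disjoint fun i => B i ∩ box) := by
      intro i j hij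
      rw [Function.onFun, Set.disjoint_left]
      rintro s ⟨hsi, hsbox⟩ ⟨hsj, _⟩
      simp only [hB, Set.mem_setOf_eq] at hsi hsj
      have h1 : (⨅ j' : {j' : Fin p // j' ≠ i}, s (j' : Fin p)) ≤ s j :=
        ciInf_le_finite (fun j' : {j' : Fin p // j' ≠ i} => s (j' : Fin p)) ⟨j, hij.symm⟩
      have h2 : (⨅ j' : {j' : Fin p // j' ≠ j}, s (j' : Fin p)) ≤ s i :=
        ciInf_le_finite (fun j' : {j' : Fin p // j' ≠ j} => s (j' : Fin p)) ⟨i, hij⟩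
      have hsi' : 0 < s i := (hsbox i (Set.mem_univ _)).1
      have hsj' : 0 < s j := (hsbox j (Set.mem_univ _)).1
      nlinarith
    have hcalc : ν ((fun s : Fin p → ℝ => m1 s / m2 s) ⁻¹' Set.Iic x) = ENNReal.ofReal x := by
      rw [← measure_inter_conull hboxc, hEq, Set.iUnion_inter,
        measure_iUnion hdisj fun i => (hBmble i).inter hboxmble]
      have hBi : ∀ i, ν (B i ∩ box) = ENNReal.ofReal (x * (1 / p)) := by
        intro i
        rw [measure_inter_conull hboxc]
        exact measure_B hp i hx0.le hx1.le
      rw [tsum_congr hBi, tsum_fintype, Finset.sum_const, Finset.card_univ, Fintype.card_fin,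
        nsmul_eq_mul]
      have hpne : (p:ℝ) ≠ 0 := by positivity
      rw [← ENNReal.ofReal_natCast p, ← ENNReal.ofReal_mul (by positivity)]
      congr 1
      field_simp
    rw [hcalc]
    rw [Measure.restrict_apply measurableSet_Iic]
    have : Set.Iic x ∩ Set.Icc (0:ℝ) 1 = Set.Icc 0 x := by
      ext t
      simp only [Set.mem_inter_iff, Set.mem_Iic, Set.mem_Icc]
      constructor
      · rintro ⟨h1, h2, _⟩; exact ⟨h2, h1⟩
      · rintro ⟨h1, h2⟩; exact ⟨h2, h1, by linarith⟩
    rw [this, Real.volume_Icc]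
    norm_num

lemma iIndep_map_pi {Ω : Type*} [MeasurableSpace Ω] (P : Measure Ω) [IsProbabilityMeasure P]
    {p : ℕ} (Y : Fin p → Ω → ℝ) (hY : ∀ i, Measurable (Y i))
    (hind : iIndepFun Y P) (μs : Fin p → Measure ℝ)
    [∀ i, SigmaFinite (μs i)] (hlaw : ∀ i, Measure.map (Y i) P = μs i) :
    Measure.map (fun ω i => Y i ω) P = Measure.pi μs := by
  refine (Measure.pi_eq fun s hs => ?_).symm
  rw [Measure.map_apply (measurable_pi_lambda _ hY) (MeasurableSet.univ_pi hs)]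
  have h : (fun ω i => Y i ω) ⁻¹' Set.pi Set.univ s = ⋂ i, Y i ⁻¹' s i := by
    ext ω; simp [Set.mem_pi]
  rw [h, hind.meas_iInter fun i => ⟨s i, hs i, rfl⟩]
  refine Finset.prod_congr rfl fun i _ => ?_
  rw [← hlaw i, Measure.map_apply (hY i) (hs i)]

theorem tchi_first_step_uniform
    {Ω : Type*} [MeasurableSpace Ω] (P : Measure Ω) [IsProbabilityMeasure P]
    (p : ℕ) (hp : 2 ≤ p) (Z : Fin p → Ω → ℝ)
    (hmeas : ∀ i, Measurable (Z i))
    (hgauss : ∀ i, Measure.map (Z i) P = gaussianReal 0 1)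
    (hindep : iIndepFun Z P)
    (l₁ l₂ : Ω → ℝ)
    (hl₁ : l₁ = fun ω => ⨆ i : Fin p, |Z i ω|)
    (hl₂ : l₂ = fun ω => ⨆ q : {q : Fin p × Fin p // q.1 ≠ q.2}, min |Z q.1.1 ω| |Z q.1.2 ω|) :
    Measure.map (fun ω => stdNormalSurv (l₁ ω) / stdNormalSurv (l₂ ω)) P
      = volume.restrict (Set.Icc (0 : ℝ) 1) := by
  subst hl₁ hl₂
  haveI : Nonempty (Fin p) := ⟨⟨0, by omega⟩⟩
  haveI := pair_nonempty hp
  have hg0anti : Antitone fun t : ℝ => 2 * stdNormalSurv t := by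
    intro a b hab
    have := stdNormalSurv_strictAnti.antitone hab
    simp only
    linarith
  set W : Ω → Fin p → ℝ := fun ω i => gTrans (Z i ω) with hW
  have hWmeas : Measurable W :=
    measurable_pi_lambda _ fun i => measurable_gTrans.comp (hmeas i)
  set F : (Fin p → ℝ) → ℝ := fun s =>
    (⨅ i, s i) / ⨅ q : {q : Fin p × Fin p // q.1 ≠ q.2}, max (s q.1.1) (s q.1.2) with hF
  have hFmeas : Measurable F := by
    apply Measurable.div
    · exact measurable_ciInf (fun i (s : Fin p → ℝ) => s i) fun i => measurable_pi_apply i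
    · exact measurable_ciInf (fun (q : {q : Fin p × Fin p // q.1 ≠ q.2}) (s : Fin p → ℝ) =>
        max (s q.1.1) (s q.1.2)) fun q => (measurable_pi_apply _).max (measurable_pi_apply _)
  have hcomp : (fun ω => stdNormalSurv (⨆ i : Fin p, |Z i ω|) /
      stdNormalSurv (⨆ q : {q : Fin p × Fin p // q.1 ≠ q.2}, min |Z q.1.1 ω| |Z q.1.2 ω|))
      = F ∘ W := by
    funext ω
    set a : Fin p → ℝ := fun i => |Z i ω| with ha
    have h1 : (⨅ i, W ω i) = 2 * stdNormalSurv (⨆ i, a i) := by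
      rw [antitone_map_ciSup_finite hg0anti a]
      rfl
    have h2 : (⨅ q : {q : Fin p × Fin p // q.1 ≠ q.2}, max (W ω q.1.1) (W ω q.1.2))
        = 2 * stdNormalSurv (⨆ q : {q : Fin p × Fin p // q.1 ≠ q.2}, min (a q.1.1) (a q.1.2)) := by
      rw [antitone_map_ciSup_finite hg0anti
        (fun q : {q : Fin p × Fin p // q.1 ≠ q.2} => min (a q.1.1) (a q.1.2))]
      apply iInf_congr
      intro q
      exact (hg0anti.map_min).symm
    show _ = F (W ω)
    rw [hF]
    simp only
    rw [h1, h2, mul_div_mul_left _ _ (two_ne_zero)]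
  rw [hcomp, ← Measure.map_map hFmeas hWmeas]
  have hmap : Measure.map W P = Measure.pi fun _ : Fin p => volume.restrict (Set.Ioc (0:ℝ) 1) := by
    apply iIndep_map_pi P (fun i ω => gTrans (Z i ω))
      (fun i => measurable_gTrans.comp (hmeas i))
      (hindep.comp (fun _ => gTrans) fun _ => measurable_gTrans)
    intro i
    show Measure.map (gTrans ∘ Z i) P = _
    rw [← Measure.map_map measurable_gTrans (hmeas i), hgauss i, map_gTrans]
  rw [hmap]
  exact map_Fstat hp
end
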